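/- Let R be a commutative ring and T = { a ∈ R : R_a has stable range 1 }. Then T is a saturated multiplicatively closed subset of R. -/

import Mathlib

open Matrix

/-- A commutative ring `T` has stable range 1: whenever `cT + dT = T`,
there exists `y` with `c + d*y` a unit. -/
def StableRange1 (T : Type) [CommRing T] : Prop :=
  ∀ c d : T, IsCoprime c d → ∃ y : T, IsUnit (c + d * y)

/-- The multiplicative set `S_a = { b | aR + bR = R }`. -/
def Sa (R : Type) [CommRing R] (a : R) : Submonoid R where
  carrier := {x | IsCoprime a x}
  one_mem' := isCoprime_one_right
  mul_mem' := fun hb hc => IsCoprime.mul_right hb hc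

/-- `R` is locally stable: whenever `aR + bR = R` there is `y` such that
`R/(a+by)R` has stable range 1. -/
def LocallyStable (R : Type) [CommRing R] : Prop :=
  ∀ a b : R, IsCoprime a b → ∃ y : R,
    StableRange1 (R ⧸ Ideal.span ({a + b * y} : Set R))

/-- `c` is an adequate element. -/
def Adequate {R : Type} [CommRing R] (c : R) : Prop :=
  ∀ a : R, ∃ r s : R, c = r * s ∧ IsCoprime r a ∧
    ∀ s' : R, s' ∣ s → ¬ IsUnit s' → ¬ IsCoprime s' a

/-- A ring is clean if every element is the sum of an idempotent and a unit. -/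
def IsCleanRing (T : Type) [CommRing T] : Prop :=
  ∀ x : T, ∃ e u : T, IsIdempotentElem e ∧ IsUnit u ∧ x = e + u

/-- A ring is VNL if for every `x`, `x` or `1 - x` is von Neumann regular. -/
def IsVNLRing (T : Type) [CommRing T] : Prop :=
  ∀ x : T, (∃ y : T, x = x * y * x) ∨ (∃ y : T, (1 - x) = (1 - x) * y * (1 - x))

/-- `R` has almost stable range 1: every proper homomorphic image has stable range 1. -/
def AlmostStableRange1 (R : Type) [CommRing R] : Prop :=
  ∀ I : Ideal R, I ≠ ⊥ → StableRange1 (R ⧸ I)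

/-- `R` has adequate range 1. -/
def AdequateRange1 (R : Type) [CommRing R] : Prop :=
  ∀ a b : R, IsCoprime a b → ∃ y : R, Adequate (a + b * y)

/-- A (rectangular) matrix admits diagonal reduction. -/
def DiagonalReduction {R : Type} [CommRing R] {m n : ℕ}
    (A : Matrix (Fin m) (Fin n) R) : Prop :=
  ∃ (P : Matrix (Fin m) (Fin m) R) (Q : Matrix (Fin n) (Fin n) R),
    IsUnit P ∧ IsUnit Q ∧
    (∀ (i : Fin m) (j : Fin n), (i : ℕ) ≠ (j : ℕ) → (P * A * Q) i j = 0) ∧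
    (∀ (i i' : Fin m) (j j' : Fin n), (i : ℕ) = (j : ℕ) → (i' : ℕ) = (j' : ℕ) →
      (i : ℕ) + 1 = (i' : ℕ) → (P * A * Q) i j ∣ (P * A * Q) i' j')

/-- `R` is an elementary divisor ring. -/
def ElementaryDivisorRing (R : Type) [CommRing R] : Prop :=
  ∀ (m n : ℕ) (A : Matrix (Fin m) (Fin n) R), DiagonalReduction A

/-- `GE n R` : the subgroup of `GL n R` generated by elementary matrices. -/
def GE (n : ℕ) (R : Type) [CommRing R] : Subgroup (GL (Fin n) R) :=
  Subgroup.closure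
    { M | ∃ t : Matrix.TransvectionStruct (Fin n) R,
        (M : Matrix (Fin n) (Fin n) R) = t.toMatrix }


section Aux

variable {R : Type} [CommRing R]


lemma mk_surj' {S : Submonoid R} (z : Localization S) :
    ∃ (r : R) (s : S), z = Localization.mk r s :=
  Localization.induction_on z fun y => ⟨y.1, y.2, rfl⟩

variable {a : R}

lemma coprime_of_mem {s : R} (h : s ∈ Sa R a) : IsCoprime a s := h

lemma unit_mk {n : R} (s : Sa R a) (hn : IsCoprime a n) :
    IsUnit (Localization.mk n s) := by
  refine IsUnit.of_mul_eq_one (Localization.mk (s : R) ⟨n, hn⟩) ?_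
  rw [Localization.mk_mul, ← Localization.mk_one, Localization.mk_eq_mk_iff,
    Localization.r_iff_exists]
  exact ⟨1, by push_cast; ring⟩

lemma coprime_of_unit_mk {n : R} {s : Sa R a}
    (h : IsUnit (Localization.mk n s)) : IsCoprime a n := by
  obtain ⟨b, hb⟩ := h.exists_right_inv
  obtain ⟨m, t, rfl⟩ := mk_surj' b
  rw [Localization.mk_mul, ← Localization.mk_one, Localization.mk_eq_mk_iff,
    Localization.r_iff_exists] at hb
  obtain ⟨e, he⟩ := hb
  have hco : IsCoprime a ((e : R) * (((s * t : Sa R a) : R) * 1)) := by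
    refine (coprime_of_mem e.2).mul_right ?_
    exact ((coprime_of_mem (s * t).2).mul_right isCoprime_one_right)
  rw [← he] at hco
  exact hco.of_isCoprime_of_dvd_right ⟨(e : R) * ((1 : Sa R a) : R) * m, by ring⟩

end Aux

section Main

variable {R : Type} [CommRing R] {a : R}


/-- The quotient-style condition `Q a`. -/
def QC (a : R) : Prop :=
  ∀ c d u v w : R, u * a + v * c + w * d = 1 → ∃ y : R, IsCoprime a (c + d * y)

lemma coprime_triple_of_coprime_loc {r t : R} {s w : Sa R a}
    (h : IsCoprime (Localization.mk r s) (Localization.mk t w)) :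
    ∃ u v v' : R, u * a + v * r + v' * t = 1 := by
  obtain ⟨U, V, hUV⟩ := h
  obtain ⟨p, q, rfl⟩ := mk_surj' U
  obtain ⟨p', q', rfl⟩ := mk_surj' V
  rw [Localization.mk_mul, Localization.mk_mul, Localization.add_mk,
    ← Localization.mk_one, Localization.mk_eq_mk_iff, Localization.r_iff_exists] at hUV
  obtain ⟨e, he⟩ := hUV
  have hco : IsCoprime a ((e : R) * ((((q * s) * (q' * w) : Sa R a) : R) * 1)) :=
    (coprime_of_mem e.2).mul_right
      ((coprime_of_mem ((q * s) * (q' * w)).2).mul_right isCoprime_one_right)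
  rw [← he] at hco
  obtain ⟨f, g, hfg⟩ := hco
  push_cast at hfg
  exact ⟨f, g * (e : R) * ((q' : R) * (w : R)) * p, g * (e : R) * ((q : R) * (s : R)) * p',
    by linear_combination hfg⟩

lemma q_of_sr1 (h : StableRange1 (Localization (Sa R a))) : QC a := by
  intro c d u v w huvw
  have hE : IsCoprime a (v * c + w * d) := ⟨u, 1, by linear_combination huvw⟩
  have hc : IsCoprime (Localization.mk c (1 : Sa R a)) (Localization.mk d 1) := by
    refine ⟨Localization.mk v ⟨_, hE⟩, Localization.mk w ⟨_, hE⟩, ?_⟩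
    rw [Localization.mk_mul, Localization.mk_mul, Localization.add_mk_self, mul_one]
    exact Localization.mk_self ⟨_, hE⟩
  obtain ⟨Y, hY⟩ := h _ _ hc
  obtain ⟨p, q, rfl⟩ := mk_surj' Y
  rw [Localization.mk_mul, Localization.add_mk] at hY
  have hN := coprime_of_unit_mk hY
  push_cast at hN
  -- hN : IsCoprime a (1 * (d * p) + 1 * q * c)  (roughly)
  obtain ⟨f, g, hq⟩ := coprime_of_mem q.2
  have hg : IsCoprime a g := ⟨f, (q : R), by linear_combination hq⟩
  have h1 : IsCoprime a (g * (1 * (d * p) + 1 * (q : R) * c)) := hg.mul_right hN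
  have h2 := h1.add_mul_left_right (f * c)
  refine ⟨g * p, ?_⟩
  have heq : c + d * (g * p) = g * (1 * (d * p) + 1 * (q : R) * c) + a * (f * c) := by
    linear_combination (-c) * hq
  rw [heq]; exact h2

lemma sr1_of_q (h : QC a) : StableRange1 (Localization (Sa R a)) := by
  intro C D hCD
  obtain ⟨r, s, rfl⟩ := mk_surj' C
  obtain ⟨t, w, rfl⟩ := mk_surj' D
  obtain ⟨u, v, v', huv⟩ := coprime_triple_of_coprime_loc hCD
  obtain ⟨y, hy⟩ := h r t u v v' huv
  refine ⟨Localization.mk ((w : R) * y) s, ?_⟩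
  rw [Localization.mk_mul, Localization.add_mk]
  apply unit_mk
  have hco : IsCoprime a (((s : R) * (w : R)) * (r + t * y)) :=
    ((coprime_of_mem s.2).mul_right (coprime_of_mem w.2)).mul_right hy
  have heq : (s : R) * (t * ((w : R) * y)) + ((w * s : Sa R a) : R) * r
      = ((s : R) * (w : R)) * (r + t * y) := by push_cast; ring
  rw [heq]; exact hco

lemma q_mul {x y : R} (hx : QC x) (hy : QC y) : QC (x * y) := by
  intro c d u v w h
  obtain ⟨y1, hx1⟩ := hx c d (u * y) v w (by linear_combination h)
  obtain ⟨sx, tx, hst⟩ := id hx1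
  obtain ⟨z, hz⟩ := hy (c + d * y1) (d * x) (u * x)
    (v + (w - v * y1) * d * tx) ((w - v * y1) * sx)
    (by linear_combination h + (w - v * y1) * d * hst)
  refine ⟨y1 + x * z, ?_⟩
  have hxz : IsCoprime x (c + d * (y1 + x * z)) := by
    have := hx1.add_mul_left_right (d * z)
    have heq : c + d * (y1 + x * z) = c + d * y1 + x * (d * z) := by ring
    rw [heq]; exact this
  have hyz : IsCoprime y (c + d * (y1 + x * z)) := by
    have heq : c + d * (y1 + x * z) = c + d * y1 + d * x * z := by ring
    rw [heq]; exact hz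
  exact IsCoprime.mul_left hxz hyz

lemma q_sat {x y : R} (hxy : QC (x * y)) : QC x := by
  intro c d u v w h
  obtain ⟨z, hz⟩ := hxy c (w * d + u * x) 0 v 1 (by linear_combination h)
  have hxM : IsCoprime x (c + (w * d + u * x) * z) :=
    (hz.symm.of_isCoprime_of_dvd_right ⟨y, rfl⟩).symm
  refine ⟨w * z, ?_⟩
  have := hxM.add_mul_left_right (-(u * z))
  have heq : c + d * (w * z) = c + (w * d + u * x) * z + x * (-(u * z)) := by ring
  rw [heq]; exact this

end Main

/-- `T = { a | R_a has stable range 1 }` is a saturated multiplicatively closed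
subset of `R`. -/
theorem stmt_17 (R : Type) [CommRing R] :
    (1 : R) ∈ {a : R | StableRange1 (Localization (Sa R a))} ∧
    (∀ x ∈ {a : R | StableRange1 (Localization (Sa R a))},
      ∀ y ∈ {a : R | StableRange1 (Localization (Sa R a))},
        x * y ∈ {a : R | StableRange1 (Localization (Sa R a))}) ∧
    (∀ x y : R, x * y ∈ {a : R | StableRange1 (Localization (Sa R a))} →
      x ∈ {a : R | StableRange1 (Localization (Sa R a))} ∧
      y ∈ {a : R | StableRange1 (Localization (Sa R a))}) := by
  refine ⟨?_, ?_, ?_⟩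
  · exact sr1_of_q (fun c d u v w h => ⟨0, isCoprime_one_left⟩)
  · intro x hx y hy
    exact sr1_of_q (q_mul (q_of_sr1 hx) (q_of_sr1 hy))
  · intro x y hxy
    have hQ := q_of_sr1 hxy
    have hQ' : QC (y * x) := by rw [mul_comm]; exact hQ
    exact ⟨sr1_of_q (q_sat hQ), sr1_of_q (q_sat hQ')⟩
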